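/- Let X have the logarithmic distribution with parameter p ∈ (0,1) and let (pX)^s be the size-biased version of pX; let X̃ have density f(y) = E[X 1{X ≥ y/p}]/(p E[X²]) for y ≥ 0. Then the Wasserstein distance between the law of (pX)^s and the law of X̃ equals p/2. -/

import Mathlib

open MeasureTheory Set

lemma lintegral_atomic (a wgt : ℕ → ℝ) (g : ℝ → ENNReal) (hg : Measurable g) :
    ∫⁻ x, g x ∂(Measure.sum fun i => ENNReal.ofReal (wgt i) • Measure.dirac (a i))
      = ∑' i, ENNReal.ofReal (wgt i) * g (a i) := by
  rw [lintegral_sum_measure]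
  exact tsum_congr fun i => by rw [lintegral_smul_measure, lintegral_dirac' _ hg, smul_eq_mul]

open Classical in
lemma measure_atomic (a wgt : ℕ → ℝ) (s : Set ℝ) (hs : MeasurableSet s) :
    (Measure.sum fun i => ENNReal.ofReal (wgt i) • Measure.dirac (a i)) s
      = ∑' i, if a i ∈ s then ENNReal.ofReal (wgt i) else 0 := by
  classical
  rw [Measure.sum_apply _ hs]
  refine tsum_congr fun i => ?_
  rw [Measure.smul_apply, Measure.dirac_apply' _ hs]
  by_cases h : a i ∈ s <;> simp [Set.indicator, h]

lemma integral_atomic (a wgt : ℕ → ℝ) (hw : ∀ i, 0 ≤ wgt i) (f : ℝ → ℝ)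
    (hf : Measurable f) (hfa : ∀ i, 0 ≤ f (a i))
    (hs : Summable fun i => wgt i * f (a i)) :
    ∫ x, f x ∂(Measure.sum fun i => ENNReal.ofReal (wgt i) • Measure.dirac (a i))
      = ∑' i, wgt i * f (a i) := by
  set μ := Measure.sum fun i => ENNReal.ofReal (wgt i) • Measure.dirac (a i) with hμ
  have hN : MeasurableSet {x : ℝ | f x < 0} := measurableSet_lt hf measurable_const
  have hmu0 : μ {x : ℝ | f x < 0} = 0 := by
    rw [hμ, measure_atomic _ _ _ hN]
    have hz : ∀ i, (if a i ∈ {x : ℝ | f x < 0} then ENNReal.ofReal (wgt i) else 0) = 0 := by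
      intro i
      rw [if_neg]
      simpa using not_lt.2 (hfa i)
    simp only [hz]
    exact tsum_zero
  have hae : 0 ≤ᵐ[μ] f := by
    refine ae_iff.2 ?_
    convert hmu0 using 2
    ext x; simp [not_le]
  rw [integral_eq_lintegral_of_nonneg_ae hae hf.aestronglyMeasurable, hμ,
    lintegral_atomic a wgt (fun x => ENNReal.ofReal (f x)) (ENNReal.measurable_ofReal.comp hf)]
  have : ∀ i, ENNReal.ofReal (wgt i) * ENNReal.ofReal (f (a i))
      = ENNReal.ofReal (wgt i * f (a i)) := fun i => (ENNReal.ofReal_mul (hw i)).symm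
  simp_rw [this]
  rw [← ENNReal.ofReal_tsum_of_nonneg (fun i => mul_nonneg (hw i) (hfa i)) hs,
    ENNReal.toReal_ofReal (tsum_nonneg fun i => mul_nonneg (hw i) (hfa i))]

lemma tsum_ite_shift {M : Type*} [AddCommMonoid M] [TopologicalSpace M] [T2Space M]
    (k : ℕ) (f : ℕ → M) :
    (∑' i : ℕ, if k ≤ i then f i else 0) = ∑' n : ℕ, f (k + n) := by
  have hinj : Function.Injective (fun n : ℕ => k + n) := fun a b h =>
    Nat.add_left_cancel h
  have hsupp : Function.support (fun i => if k ≤ i then f i else 0)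
      ⊆ Set.range (fun n : ℕ => k + n) := by
    intro x hx
    by_cases h : k ≤ x
    · exact ⟨x - k, by show k + (x - k) = x; omega⟩
    · simp [h] at hx
  rw [← Function.Injective.tsum_eq hinj hsupp]
  exact tsum_congr fun n => if_pos (Nat.le_add_right k n)

lemma Ioi_eq_iUnion_pieces {p : ℝ} (hp : 0 < p) (m : ℕ) :
    Set.Ioi (p * (m : ℝ)) =
      ⋃ n : ℕ, Set.Ioc (p * ((m + n : ℕ) : ℝ)) (p * (((m + n : ℕ) : ℝ) + 1)) := by
  ext z
  simp only [Set.mem_Ioi, Set.mem_iUnion, Set.mem_Ioc]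
  constructor
  · intro hz
    have hm0 : (0 : ℝ) ≤ p * m := by positivity
    have hz0 : 0 < z := lt_of_le_of_lt hm0 hz
    have hdp : (m : ℝ) < z / p := by rw [lt_div_iff₀ hp]; nlinarith
    have hmt : m + 1 ≤ ⌈z / p⌉₊ := Nat.lt_ceil.2 hdp
    set t := ⌈z / p⌉₊ with ht
    refine ⟨t - (m + 1), ?_, ?_⟩
    · have hc : ((m + (t - (m + 1)) : ℕ) : ℝ) = (t : ℝ) - 1 := by
        have h1 : m + (t - (m + 1)) = t - 1 := by omega
        rw [h1, Nat.cast_sub (by omega)]; norm_num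
      rw [hc]
      have h1 : (t : ℝ) < z / p + 1 := Nat.ceil_lt_add_one (le_of_lt (div_pos hz0 hp))
      have h2 : (t : ℝ) - 1 < z / p := by linarith
      have h3 := (lt_div_iff₀ hp).1 h2
      nlinarith
    · have hc : ((m + (t - (m + 1)) : ℕ) : ℝ) + 1 = (t : ℝ) := by
        have h1 : m + (t - (m + 1)) = t - 1 := by omega
        rw [h1, Nat.cast_sub (by omega)]; norm_num
      rw [hc]
      have h1 := Nat.le_ceil (z / p)
      rw [div_le_iff₀ hp] at h1
      nlinarith
  · rintro ⟨n, h1, h2⟩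
    have hle : p * (m : ℝ) ≤ p * ((m + n : ℕ) : ℝ) := by
      apply mul_le_mul_of_nonneg_left _ hp.le
      exact_mod_cast Nat.le_add_right m n
    linarith

lemma pieces_disjoint {p : ℝ} (hp : 0 < p) (m : ℕ) :
    Pairwise (Function.onFun Disjoint fun n : ℕ =>
      Set.Ioc (p * ((m + n : ℕ) : ℝ)) (p * (((m + n : ℕ) : ℝ) + 1))) := by
  intro i j hij
  refine Set.Ioc_disjoint_Ioc.2 ?_
  rcases hij.lt_or_gt with h | h
  · refine le_trans (min_le_left _ _) (le_trans ?_ (le_max_right _ _))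
    have h1 : ((m + i : ℕ) : ℝ) + 1 ≤ ((m + j : ℕ) : ℝ) := by
      exact_mod_cast (by omega : (m + i) + 1 ≤ m + j)
    calc p * (((m + i : ℕ) : ℝ) + 1) ≤ p * ((m + j : ℕ) : ℝ) :=
          mul_le_mul_of_nonneg_left h1 hp.le
      _ = p * ((m + j : ℕ) : ℝ) := rfl
  · refine le_trans (min_le_right _ _) (le_trans ?_ (le_max_left _ _))
    have h1 : ((m + j : ℕ) : ℝ) + 1 ≤ ((m + i : ℕ) : ℝ) := by
      exact_mod_cast (by omega : (m + j) + 1 ≤ m + i)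
    exact mul_le_mul_of_nonneg_left h1 hp.le

open ProbabilityTheory Real

set_option maxHeartbeats 2000000 in
theorem wasserstein_sizeBiased_equilibrium_logarithmic (p : ℝ) (hp0 : 0 < p) (hp1 : p < 1)
    (μX ν₁ ν₂ : Measure ℝ)
    (hμX : μX = Measure.sum fun i : ℕ =>
      ENNReal.ofReal (-(1 - p) ^ (i + 1) / (((i : ℝ) + 1) * Real.log p)) •
        Measure.dirac (((i : ℝ) + 1)))
    (hν₁ : ν₁ = (Measure.map (fun x => p * x) μX).withDensity fun x =>
      ENNReal.ofReal (x / ∫ y, y ∂(Measure.map (fun x => p * x) μX)))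
    (hν₂ : ν₂ = volume.withDensity fun y =>
      ENNReal.ofReal (if 0 ≤ y then
        (∫ x, x * Set.indicator (Set.Ici (y / p)) (fun _ => (1 : ℝ)) x ∂μX)
          / (p * ∫ x, x ^ 2 ∂μX) else 0)) :
    ∫ x in Set.Ioi (0 : ℝ), |(ν₁ (Set.Ici x)).toReal - (ν₂ (Set.Ici x)).toReal| = p / 2 := by
  classical
  set q : ℝ := 1 - p with hqdef
  have hq0 : 0 < q := by rw [hqdef]; linarith
  have hq1 : q < 1 := by rw [hqdef]; linarith
  have h1q : 1 - q = p := by rw [hqdef]; ring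
  have hlog : Real.log p < 0 := Real.log_neg hp0 hp1
  set C : ℝ := -(Real.log p)⁻¹ with hCdef
  have hC : 0 < C := by rw [hCdef, neg_pos]; exact inv_lt_zero.2 hlog
  have hsq : Summable fun n : ℕ => q ^ n := summable_geometric_of_lt_one hq0.le hq1
  have htsq : (∑' n : ℕ, q ^ n) = p⁻¹ := by
    rw [tsum_geometric_of_lt_one hq0.le hq1, h1q]
  -- the weights
  have hwgt : ∀ i : ℕ, -q ^ (i + 1) / (((i : ℝ) + 1) * Real.log p)
      = C * q ^ (i + 1) / ((i : ℝ) + 1) := by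
    intro i
    have h1 : ((i : ℝ) + 1) ≠ 0 := by positivity
    rw [hCdef]
    field_simp
  have hwpos : ∀ i : ℕ, 0 ≤ C * q ^ (i + 1) / ((i : ℝ) + 1) := by
    intro i; positivity
  have hμX' : μX = Measure.sum fun i : ℕ =>
      ENNReal.ofReal (C * q ^ (i + 1) / ((i : ℝ) + 1)) • Measure.dirac (((i : ℝ) + 1)) := by
    rw [hμX]
    congr 1
    funext i
    rw [hwgt i]
  have hmap : Measure.map (fun x => p * x) (Measure.sum fun i : ℕ =>
        ENNReal.ofReal (C * q ^ (i + 1) / ((i : ℝ) + 1)) • Measure.dirac (((i : ℝ) + 1)))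
      = Measure.sum fun i : ℕ =>
        ENNReal.ofReal (C * q ^ (i + 1) / ((i : ℝ) + 1)) • Measure.dirac (p * ((i : ℝ) + 1)) := by
    rw [Measure.map_sum (measurable_const_mul p).aemeasurable]
    congr 1
    funext i
    rw [Measure.map_smul, Measure.map_dirac' (measurable_const_mul p)]
  -- geometric sums
  have hgeos : ∀ m : ℕ, Summable fun n : ℕ => q ^ (m + n) * p :=
    fun m => (hsq.mul_left (q ^ m * p)).congr fun n => by rw [pow_add]; ring
  have hgeo : ∀ m : ℕ, (∑' n : ℕ, q ^ (m + n) * p) = q ^ m := by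
    intro m
    have h1 : ∀ n : ℕ, q ^ (m + n) * p = (q ^ m * p) * q ^ n := fun n => by
      rw [pow_add]; ring
    rw [tsum_congr h1, tsum_mul_left, htsq]
    field_simp
  -- mean of the mapped measure
  have hM' : (∫ y, y ∂(Measure.sum fun i : ℕ =>
        ENNReal.ofReal (C * q ^ (i + 1) / ((i : ℝ) + 1)) • Measure.dirac (p * ((i : ℝ) + 1))))
      = C * q := by
    have hterm : ∀ i : ℕ, (C * q ^ (i + 1) / ((i : ℝ) + 1)) * (p * ((i : ℝ) + 1))
        = (p * C * q) * q ^ i := by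
      intro i
      have h1 : ((i : ℝ) + 1) ≠ 0 := by positivity
      rw [pow_succ]
      field_simp
    rw [integral_atomic (fun i : ℕ => p * ((i : ℝ) + 1)) (fun i : ℕ => C * q ^ (i + 1) / ((i : ℝ) + 1))
      hwpos (fun y => y) measurable_id (fun i => by positivity)
      (((hsq.mul_left (p * C * q)).congr fun i => (hterm i).symm))]
    rw [tsum_congr hterm, tsum_mul_left, htsq]
    field_simp
  -- second moment
  have hnorm : ‖q‖ < 1 := by rw [Real.norm_eq_abs, abs_of_pos hq0]; exact hq1
  have hsum_nq : Summable fun n : ℕ => (n : ℝ) * q ^ n := by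
    have := summable_pow_mul_geometric_of_norm_lt_one 1 hnorm
    simpa using this
  have hsum2 : Summable fun i : ℕ => ((i : ℝ) + 1) * q ^ (i + 1) := by
    have h := hsum_nq.comp_injective Nat.succ_injective
    refine h.congr fun i => ?_
    simp [Function.comp, Nat.succ_eq_add_one]
  have hts : (∑' i : ℕ, ((i : ℝ) + 1) * q ^ (i + 1)) = q / p ^ 2 := by
    have h0 := Summable.tsum_eq_zero_add hsum_nq
    rw [tsum_coe_mul_geometric_of_norm_lt_one hnorm] at h0
    have h2 : (∑' i : ℕ, ((i : ℝ) + 1) * q ^ (i + 1)) = ∑' i : ℕ, ((i + 1 : ℕ) : ℝ) * q ^ (i + 1) :=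
      tsum_congr fun i => by push_cast; ring
    simp only [Nat.cast_zero, zero_mul, pow_zero, zero_add] at h0
    rw [h2, ← h0, h1q]
  have hX2 : (∫ x, x ^ 2 ∂μX) = C * (q / p ^ 2) := by
    have hterm : ∀ i : ℕ, (C * q ^ (i + 1) / ((i : ℝ) + 1)) * (((i : ℝ) + 1) ^ 2)
        = C * (((i : ℝ) + 1) * q ^ (i + 1)) := by
      intro i
      have h1 : ((i : ℝ) + 1) ≠ 0 := by positivity
      field_simp
    rw [hμX', integral_atomic (fun i : ℕ => ((i : ℝ) + 1)) (fun i : ℕ => C * q ^ (i + 1) / ((i : ℝ) + 1))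
      hwpos (fun x => x ^ 2) (measurable_id.pow_const 2) (fun i => by positivity)
      ((hsum2.mul_left C).congr fun i => (hterm i).symm)]
    rw [tsum_congr hterm, tsum_mul_left, hts]
  -- condition across pieces
  have hxcond : ∀ (k i : ℕ) (x : ℝ), x ∈ Set.Ioc (p * (k : ℝ)) (p * ((k : ℝ) + 1)) →
      (x ≤ p * ((i : ℝ) + 1) ↔ k ≤ i) := by
    intro k i x hx
    constructor
    · intro h
      by_contra hik
      push_neg at hik
      have h2 : (i : ℝ) + 1 ≤ (k : ℝ) := by exact_mod_cast hik
      nlinarith [hx.1, mul_le_mul_of_nonneg_left h2 hp0.le]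
    · intro h
      have h2 : (k : ℝ) + 1 ≤ (i : ℝ) + 1 := by
        have : (k : ℝ) ≤ (i : ℝ) := by exact_mod_cast h
        linarith
      nlinarith [hx.2, mul_le_mul_of_nonneg_left h2 hp0.le]
  -- the E[X 1_{X ≥ y/p}] integral
  have hN : ∀ (k : ℕ) (y : ℝ), y ∈ Set.Ioc (p * (k : ℝ)) (p * ((k : ℝ) + 1)) →
      (∫ x, x * Set.indicator (Set.Ici (y / p)) (fun _ => (1 : ℝ)) x ∂μX)
        = C * q ^ (k + 1) / p := by
    intro k y hy
    have hcond : ∀ i : ℕ, (((i : ℝ) + 1) ∈ Set.Ici (y / p)) ↔ k ≤ i := by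
      intro i
      rw [Set.mem_Ici, div_le_iff₀ hp0, mul_comm]
      exact hxcond k i y hy
    have hterm : ∀ i : ℕ, (C * q ^ (i + 1) / ((i : ℝ) + 1)) *
        (((i : ℝ) + 1) * Set.indicator (Set.Ici (y / p)) (fun _ => (1 : ℝ)) ((i : ℝ) + 1))
        = if k ≤ i then C * q ^ (i + 1) else 0 := by
      intro i
      have h1 : ((i : ℝ) + 1) ≠ 0 := by positivity
      by_cases h : k ≤ i
      · rw [Set.indicator_of_mem ((hcond i).2 h), if_pos h]
        field_simp
      · rw [Set.indicator_of_notMem (fun hm => h ((hcond i).1 hm)), if_neg h]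
        ring
    have hb : Summable fun i : ℕ => C * q ^ (i + 1) :=
      (hsq.mul_left (C * q)).congr fun i => by rw [pow_succ]; ring
    have hsumN : Summable fun i : ℕ => (if k ≤ i then C * q ^ (i + 1) else 0) := by
      refine Summable.of_nonneg_of_le (fun i => ?_) (fun i => ?_) hb
      · split <;> positivity
      · split
        · exact le_rfl
        · positivity
    rw [hμX', integral_atomic (fun i : ℕ => ((i : ℝ) + 1)) (fun i : ℕ => C * q ^ (i + 1) / ((i : ℝ) + 1))
      hwpos (fun x => x * Set.indicator (Set.Ici (y / p)) (fun _ => (1 : ℝ)) x)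
      (measurable_id.mul (measurable_const.indicator measurableSet_Ici))
      (fun i => mul_nonneg (by positivity) (Set.indicator_nonneg (fun _ _ => zero_le_one) _))
      (hsumN.congr fun i => (hterm i).symm)]
    rw [tsum_congr hterm, tsum_ite_shift k (fun i => C * q ^ (i + 1))]
    have h3 : ∀ n : ℕ, C * q ^ (k + n + 1) = (C * q ^ (k + 1)) * q ^ n := fun n => by
      rw [show k + n + 1 = (k + 1) + n from by omega, pow_add]; ring
    rw [tsum_congr h3, tsum_mul_left, htsq, div_eq_mul_inv]
  -- pointwise density of ν₂ on pieces
  have hd2point : ∀ (k : ℕ) (y : ℝ), y ∈ Set.Ioc (p * (k : ℝ)) (p * ((k : ℝ) + 1)) →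
      ENNReal.ofReal (if 0 ≤ y then
        (∫ x, x * Set.indicator (Set.Ici (y / p)) (fun _ => (1 : ℝ)) x ∂μX)
          / (p * ∫ x, x ^ 2 ∂μX) else 0) = ENNReal.ofReal (q ^ k) := by
    intro k y hy
    have hy0 : 0 ≤ y := le_of_lt (lt_of_le_of_lt (by positivity) hy.1)
    rw [if_pos hy0, hN k y hy, hX2]
    congr 1
    rw [pow_succ]
    field_simp
  -- ν₂ of subintervals of pieces
  have hνsub : ∀ (k : ℕ) (x : ℝ), p * (k : ℝ) ≤ x → x ≤ p * ((k : ℝ) + 1) →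
      ν₂ (Set.Ioc x (p * ((k : ℝ) + 1)))
        = ENNReal.ofReal (q ^ k * (p * ((k : ℝ) + 1) - x)) := by
    intro k x hx1 hx2
    rw [hν₂, withDensity_apply _ measurableSet_Ioc]
    rw [setLIntegral_congr_fun measurableSet_Ioc (fun y hy =>
      hd2point k y ⟨lt_of_le_of_lt hx1 hy.1, hy.2⟩)]
    rw [setLIntegral_const, Real.volume_Ioc, ← ENNReal.ofReal_mul (by positivity)]
  have hνpiece : ∀ k : ℕ, ν₂ (Set.Ioc (p * (k : ℝ)) (p * ((k : ℝ) + 1)))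
      = ENNReal.ofReal (q ^ k * p) := by
    intro k
    rw [hνsub k (p * (k : ℝ)) le_rfl (by nlinarith)]
    congr 1
    ring
  -- ν₂ of tails
  have hν₂tail : ∀ m : ℕ, ν₂ (Set.Ioi (p * (m : ℝ))) = ENNReal.ofReal (q ^ m) := by
    intro m
    rw [Ioi_eq_iUnion_pieces hp0 m,
      measure_iUnion (pieces_disjoint hp0 m) (fun n => measurableSet_Ioc)]
    have h1 : ∀ n : ℕ, ν₂ (Set.Ioc (p * ((m + n : ℕ) : ℝ)) (p * (((m + n : ℕ) : ℝ) + 1)))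
        = ENNReal.ofReal (q ^ (m + n) * p) := fun n => hνpiece (m + n)
    rw [tsum_congr h1, ← ENNReal.ofReal_tsum_of_nonneg (fun n => by positivity) (hgeos m),
      hgeo m]
  -- ν₂ singletons are null
  have hsingle : ∀ x : ℝ, ν₂ {x} = 0 := by
    intro x
    rw [hν₂, withDensity_apply _ (measurableSet_singleton x),
      Measure.restrict_eq_zero.2 (by simp), lintegral_zero_measure]
  -- ν₂ of Ici on pieces
  have hν₂Ici : ∀ (k : ℕ) (x : ℝ), x ∈ Set.Ioc (p * (k : ℝ)) (p * ((k : ℝ) + 1)) →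
      ν₂ (Set.Ici x) = ENNReal.ofReal (q ^ k * (p * ((k : ℝ) + 1) - x))
        + ENNReal.ofReal (q ^ (k + 1)) := by
    intro k x hx
    have hsub : Set.Ici x ⊆ {x} ∪ Set.Ioi x := by
      intro z hz
      rcases eq_or_lt_of_le (Set.mem_Ici.1 hz) with h | h
      · exact Or.inl h.symm
      · exact Or.inr h
    have h0 : ν₂ (Set.Ici x) = ν₂ (Set.Ioi x) := by
      refine le_antisymm (le_trans (measure_mono hsub) ?_)
        (measure_mono Set.Ioi_subset_Ici_self)
      refine le_trans (measure_union_le _ _) ?_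
      rw [hsingle x, zero_add]
    rw [h0]
    have hdj : Disjoint (Set.Ioc x (p * ((k : ℝ) + 1))) (Set.Ioi (p * ((k : ℝ) + 1))) :=
      Set.disjoint_left.2 fun z hz hz' => absurd hz.2 (not_le.2 hz')
    rw [← Set.Ioc_union_Ioi_eq_Ioi hx.2, measure_union hdj measurableSet_Ioi]
    rw [hνsub k x hx.1.le hx.2]
    have ht := hν₂tail (k + 1)
    push_cast at ht
    rw [ht]
  -- ν₁ of Ici on pieces
  rw [hμX', hmap, hM'] at hν₁
  have hgmeas : ∀ x : ℝ, Measurable ((Set.Ici x).indicator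
      (fun y : ℝ => ENNReal.ofReal (y / (C * q)))) :=
    fun x => (ENNReal.measurable_ofReal.comp (measurable_id.div_const _)).indicator
      measurableSet_Ici
  have hν₁apply : ∀ x : ℝ, ν₁ (Set.Ici x)
      = ∑' i : ℕ, ENNReal.ofReal (C * q ^ (i + 1) / ((i : ℝ) + 1)) *
          (Set.Ici x).indicator (fun y : ℝ => ENNReal.ofReal (y / (C * q))) (p * ((i : ℝ) + 1)) := by
    intro x
    rw [hν₁, withDensity_apply _ measurableSet_Ici,
      ← lintegral_indicator measurableSet_Ici,
      lintegral_atomic (fun i : ℕ => p * ((i : ℝ) + 1))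
        (fun i : ℕ => C * q ^ (i + 1) / ((i : ℝ) + 1)) _ (hgmeas x)]
  have hterm₁ : ∀ (i : ℕ), (C * q ^ (i + 1) / ((i : ℝ) + 1)) * (p * ((i : ℝ) + 1) / (C * q))
      = q ^ i * p := by
    intro i
    have h1 : ((i : ℝ) + 1) ≠ 0 := by positivity
    rw [pow_succ]
    field_simp
  have hν₁Ici : ∀ (k : ℕ) (x : ℝ), x ∈ Set.Ioc (p * (k : ℝ)) (p * ((k : ℝ) + 1)) →
      ν₁ (Set.Ici x) = ENNReal.ofReal (q ^ k) := by
    intro k x hx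
    rw [hν₁apply x]
    have hterm : ∀ i : ℕ, ENNReal.ofReal (C * q ^ (i + 1) / ((i : ℝ) + 1)) *
        (Set.Ici x).indicator (fun y : ℝ => ENNReal.ofReal (y / (C * q))) (p * ((i : ℝ) + 1))
        = if k ≤ i then ENNReal.ofReal (q ^ i * p) else 0 := by
      intro i
      by_cases h : k ≤ i
      · rw [Set.indicator_of_mem (Set.mem_Ici.2 ((hxcond k i x hx).2 h)), if_pos h,
          ← ENNReal.ofReal_mul (hwpos i), hterm₁ i]
      · rw [Set.indicator_of_notMem (fun hm => h ((hxcond k i x hx).1 (Set.mem_Ici.1 hm))),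
          if_neg h, mul_zero]
    rw [tsum_congr hterm, tsum_ite_shift k (fun i => ENNReal.ofReal (q ^ i * p))]
    rw [← ENNReal.ofReal_tsum_of_nonneg (fun n => by positivity) (hgeos k), hgeo k]
  -- finiteness
  have hν₁univ : ν₁ Set.univ = 1 := by
    rw [hν₁, withDensity_apply _ MeasurableSet.univ, Measure.restrict_univ,
      lintegral_atomic (fun i : ℕ => p * ((i : ℝ) + 1))
        (fun i : ℕ => C * q ^ (i + 1) / ((i : ℝ) + 1))
        (fun y : ℝ => ENNReal.ofReal (y / (C * q)))
        ((measurable_id.div_const _).ennreal_ofReal)]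
    have hterm : ∀ i : ℕ, ENNReal.ofReal (C * q ^ (i + 1) / ((i : ℝ) + 1)) *
        ENNReal.ofReal (p * ((i : ℝ) + 1) / (C * q)) = ENNReal.ofReal (q ^ (0 + i) * p) := by
      intro i
      rw [← ENNReal.ofReal_mul (hwpos i), hterm₁ i, Nat.zero_add]
    rw [tsum_congr hterm, ← ENNReal.ofReal_tsum_of_nonneg (fun n => by positivity) (hgeos 0),
      hgeo 0, pow_zero, ENNReal.ofReal_one]
  have h1top : ∀ x : ℝ, ν₁ (Set.Ici x) ≠ ⊤ := fun x =>
    ne_top_of_le_ne_top (by rw [hν₁univ]; exact ENNReal.one_ne_top)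
      (measure_mono (Set.subset_univ _))
  have hν₂Iio : ν₂ (Set.Iio 0) = 0 := by
    rw [hν₂, withDensity_apply _ measurableSet_Iio]
    rw [setLIntegral_congr_fun measurableSet_Iio (fun y hy => by
      rw [if_neg (not_le.2 hy), ENNReal.ofReal_zero])]
    simp
  have hν₂Ioi0 : ν₂ (Set.Ioi (0 : ℝ)) = 1 := by
    have := hν₂tail 0
    simpa using this
  have h2univ : ν₂ Set.univ ≤ 2 := by
    rw [← Set.Iio_union_Ici (a := (0 : ℝ))]
    refine le_trans (measure_union_le _ _) ?_
    rw [hν₂Iio, zero_add]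
    have : Set.Ici (0 : ℝ) = Set.Ioi 0 ∪ {0} := by
      rw [Set.union_singleton, Set.Ioi_insert]
    rw [this]
    refine le_trans (measure_union_le _ _) ?_
    rw [hν₂Ioi0, hsingle]
    norm_num
  have h2top : ∀ x : ℝ, ν₂ (Set.Ici x) ≠ ⊤ := fun x =>
    ne_top_of_le_ne_top (lt_of_le_of_lt h2univ (by norm_num)).ne
      (measure_mono (Set.subset_univ _))
  -- measurability of the integrand
  have hF1 : Antitone fun x : ℝ => (ν₁ (Set.Ici x)).toReal := fun x y hxy =>
    ENNReal.toReal_mono (h1top x) (measure_mono (Set.Ici_subset_Ici.2 hxy))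
  have hF2 : Antitone fun x : ℝ => (ν₂ (Set.Ici x)).toReal := fun x y hxy =>
    ENNReal.toReal_mono (h2top x) (measure_mono (Set.Ici_subset_Ici.2 hxy))
  have hgm : Measurable fun x : ℝ => |(ν₁ (Set.Ici x)).toReal - (ν₂ (Set.Ici x)).toReal| :=
    (hF1.measurable.sub hF2.measurable).abs
  -- final computation
  rw [integral_eq_lintegral_of_nonneg_ae (ae_of_all _ fun x => abs_nonneg _)
    hgm.aestronglyMeasurable]
  have hIoi : Set.Ioi (0 : ℝ) = ⋃ n : ℕ, Set.Ioc (p * (n : ℝ)) (p * ((n : ℝ) + 1)) := by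
    have h := Ioi_eq_iUnion_pieces hp0 0
    simpa using h
  have hdisj := pieces_disjoint hp0 0
  simp only [Nat.zero_add] at hdisj
  rw [hIoi, lintegral_iUnion (fun n => measurableSet_Ioc) hdisj]
  have hpiece : ∀ k : ℕ,
      (∫⁻ x in Set.Ioc (p * (k : ℝ)) (p * ((k : ℝ) + 1)),
        ENNReal.ofReal |(ν₁ (Set.Ici x)).toReal - (ν₂ (Set.Ici x)).toReal|)
      = ENNReal.ofReal (p ^ 2 / 2 * q ^ k) := by
    intro k
    have hle : p * (k : ℝ) ≤ p * ((k : ℝ) + 1) := by nlinarith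
    rw [setLIntegral_congr_fun (g := fun x : ℝ => ENNReal.ofReal (q ^ k * (x - p * (k : ℝ))))
      measurableSet_Ioc (fun x hx => by
      rw [hν₁Ici k x hx, hν₂Ici k x hx, ENNReal.toReal_add ENNReal.ofReal_ne_top
        ENNReal.ofReal_ne_top, ENNReal.toReal_ofReal (by positivity),
        ENNReal.toReal_ofReal (mul_nonneg (by positivity) (by linarith [hx.2])),
        ENNReal.toReal_ofReal (by positivity)]
      have he : q ^ k - (q ^ k * (p * ((k : ℝ) + 1) - x) + q ^ (k + 1))
          = q ^ k * (x - p * (k : ℝ)) := by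
        rw [pow_succ, hqdef]
        ring
      rw [he, abs_of_nonneg (mul_nonneg (by positivity) (by linarith [hx.1]))])]
    have hcont : Continuous fun x : ℝ => q ^ k * (x - p * (k : ℝ)) := by continuity
    have hint : IntegrableOn (fun x : ℝ => q ^ k * (x - p * (k : ℝ)))
        (Set.Ioc (p * (k : ℝ)) (p * ((k : ℝ) + 1))) := hcont.integrableOn_Ioc
    have hnn : 0 ≤ᵐ[volume.restrict (Set.Ioc (p * (k : ℝ)) (p * ((k : ℝ) + 1)))]
        fun x : ℝ => q ^ k * (x - p * (k : ℝ)) :=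
      (ae_restrict_iff' measurableSet_Ioc).2 (ae_of_all _ fun x hx =>
        mul_nonneg (by positivity) (by linarith [hx.1]))
    rw [← ofReal_integral_eq_lintegral_ofReal hint hnn]
    congr 1
    rw [← intervalIntegral.integral_of_le hle, intervalIntegral.integral_const_mul,
      intervalIntegral.integral_sub intervalIntegral.intervalIntegrable_id
        intervalIntegrable_const,
      integral_id, intervalIntegral.integral_const]
    simp only [smul_eq_mul]
    ring
  rw [tsum_congr hpiece,
    ← ENNReal.ofReal_tsum_of_nonneg (fun k => by positivity) (hsq.mul_left _),
    tsum_mul_left, htsq, ENNReal.toReal_ofReal (by positivity)]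
  field_simp
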